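/- Steering certifies incompatibility structures for full Schmidt rank states: let |ψ⟩ = (D ⊗ 1)|φ⁺_d⟩ with D positive definite diagonal, tr(D²) = 1, and let {M_{a|x}} be POVMs on ℂ^d. If the assemblage σ_{a|x} = D M_{a|x}ᵀ D admits a decomposition σ_{a|x} = Σ_i p_i Σ_λ π^{C_i}_λ p^{C_i}(a|x,λ) ρ^{C_i}_λ (with ρ^{C_i}_λ density matrices, the inner decomposition holding for x in each hyper-edge of C_i), then {M_{a|x}} is not genuinely C-incompatible: M_{a|x} = Σ_i p_i Σ_λ p^{C_i}(a|x,λ) E^{C_i}_λ with E^{C_i}_λ = D⁻¹ (π^{C_i}_λ ρ^{C_i}_λ)ᵀ D⁻¹ forming valid POVMs with Σ_λ E^{C_i}_λ = 1. -/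

import Mathlib

open Matrix
open scoped ComplexOrder

noncomputable section

/-- If, for a full-Schmidt-rank state `|ψ⟩ = (D ⊗ 1)|φ⁺_d⟩` (`D` positive definite
diagonal, `tr(D²) = 1`), the assemblage `σ_{a|x} = D M_{a|x}ᵀ D` decomposes as
`σ_{a|x} = Σ_i p_i τ^{C_i}_{a|x}` with `τ^{C_i}_{a|x} = Σ_λ π^{C_i}_λ p^{C_i}(a|x,λ) ρ^{C_i}_λ`
on each hyper-edge `C_i`, then `{M_{a|x}}` is not genuinely `C`-incompatible:
`M_{a|x} = Σ_i p_i J^{C_i}_{a|x}` where the `J^{C_i}` are POVM sets satisfying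
`J^{C_i}_{a|x} = Σ_λ p^{C_i}(a|x,λ) E^{C_i}_λ` on `C_i`, with
`E^{C_i}_λ = D⁻¹ (π^{C_i}_λ ρ^{C_i}_λ)ᵀ D⁻¹` valid POVMs summing to `1`. -/
theorem steering_decomposition_implies_not_genuinely_C_incompatible
    (d N m : ℕ) (X A : Type) [Fintype X] [Fintype A]
    (dv : Fin d → ℝ) (hdv : ∀ i, 0 < dv i) (htr : ∑ i, dv i ^ 2 = 1)
    (D : Matrix (Fin d) (Fin d) ℂ) (hD : D = Matrix.diagonal (fun i => (dv i : ℂ)))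
    (C : Fin N → Finset X)
    (M : X → A → Matrix (Fin d) (Fin d) ℂ)
    (hM : ∀ x a, (M x a).PosSemidef) (hMsum : ∀ x, ∑ a, M x a = 1)
    -- decomposition of the assemblage σ_{a|x} = D M_{a|x}ᵀ D
    (p : Fin N → ℝ) (hp : ∀ i, 0 ≤ p i) (hpsum : ∑ i, p i = 1)
    (π : Fin N → Fin m → ℝ) (hπ : ∀ i l, 0 ≤ π i l) (hπsum : ∀ i, ∑ l, π i l = 1)
    (q : Fin N → X → Fin m → A → ℝ)
    (hq : ∀ i x l a, 0 ≤ q i x l a) (hqsum : ∀ i x l, ∑ a, q i x l a = 1)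
    (ρst : Fin N → Fin m → Matrix (Fin d) (Fin d) ℂ)
    (hρpos : ∀ i l, (ρst i l).PosSemidef) (hρtr : ∀ i l, (ρst i l).trace = 1)
    (τ : Fin N → X → A → Matrix (Fin d) (Fin d) ℂ)
    (hτpos : ∀ i x a, (τ i x a).PosSemidef)
    (hσdecomp : ∀ x a, D * (M x a)ᵀ * D = ∑ i, (p i : ℂ) • τ i x a)
    (hτlhs : ∀ i, ∀ x ∈ C i, ∀ a,
      τ i x a = ∑ l, ((π i l * q i x l a : ℝ) : ℂ) • ρst i l)
    (hτred : ∀ i x, ∑ a, τ i x a = ∑ l, ((π i l : ℝ) : ℂ) • ρst i l)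
    (hred : ∀ i, (∑ l, ((π i l : ℝ) : ℂ) • ρst i l) = D * D) :
    (∀ i l, (D⁻¹ * (((π i l : ℝ) : ℂ) • ρst i l)ᵀ * D⁻¹).PosSemidef)
    ∧ (∀ i, (∑ l, D⁻¹ * (((π i l : ℝ) : ℂ) • ρst i l)ᵀ * D⁻¹) = 1)
    ∧ ∃ J : Fin N → X → A → Matrix (Fin d) (Fin d) ℂ,
        (∀ i x a, (J i x a).PosSemidef) ∧ (∀ i x, ∑ a, J i x a = 1) ∧
        (∀ x a, M x a = ∑ i, (p i : ℂ) • J i x a) ∧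
        (∀ i, ∀ x ∈ C i, ∀ a,
          J i x a = ∑ l, ((q i x l a : ℝ) : ℂ) •
            (D⁻¹ * (((π i l : ℝ) : ℂ) • ρst i l)ᵀ * D⁻¹)) := by
  classical
  have hdet : D.det ≠ 0 := by
    rw [hD, Matrix.det_diagonal]
    exact Finset.prod_ne_zero_iff.2 fun i _ => by
      exact_mod_cast (hdv i).ne'
  have hunit : IsUnit D.det := isUnit_iff_ne_zero.2 hdet
  have hDiD : D⁻¹ * D = 1 := Matrix.nonsing_inv_mul D hunit
  have hDDi : D * D⁻¹ = 1 := Matrix.mul_nonsing_inv D hunit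
  have hDt : Dᵀ = D := by rw [hD, Matrix.diagonal_transpose]
  have hDh : Dᴴ = D := by
    rw [hD, Matrix.diagonal_conjTranspose]
    have h : (star fun i => ((dv i : ℝ) : ℂ)) = fun i => ((dv i : ℝ) : ℂ) :=
      funext fun i => Complex.conj_ofReal _
    rw [h]
  have hDih : (D⁻¹)ᴴ = D⁻¹ := by
    rw [Matrix.conjTranspose_nonsing_inv, hDh]
  -- E i l is PSD
  have hEpos : ∀ i l, (D⁻¹ * (((π i l : ℝ) : ℂ) • ρst i l)ᵀ * D⁻¹).PosSemidef := by
    intro i l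
    have h1 : (((π i l : ℝ) : ℂ) • ρst i l).PosSemidef := by
      refine ⟨?_, fun x => ?_⟩
      · unfold Matrix.IsHermitian
        rw [Matrix.conjTranspose_smul, (hρpos i l).1.eq]
        congr 1
        exact Complex.conj_ofReal _
      · exact ((hρpos i l).smul (show (0:ℂ) ≤ ((π i l : ℝ) : ℂ) by exact_mod_cast hπ i l)).2 x
    have h2 := (h1.transpose).mul_mul_conjTranspose_same D⁻¹
    rwa [hDih] at h2
  have hEsum : ∀ i, (∑ l, D⁻¹ * (((π i l : ℝ) : ℂ) • ρst i l)ᵀ * D⁻¹) = 1 := by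
    intro i
    have : (∑ l, D⁻¹ * (((π i l : ℝ) : ℂ) • ρst i l)ᵀ * D⁻¹)
        = D⁻¹ * (∑ l, ((π i l : ℝ) : ℂ) • ρst i l)ᵀ * D⁻¹ := by
      rw [Matrix.transpose_sum, Finset.mul_sum, Finset.sum_mul]
    rw [this, hred i, Matrix.transpose_mul, hDt]
    rw [Matrix.mul_assoc, Matrix.mul_assoc, hDDi, Matrix.mul_one, hDiD]
  refine ⟨hEpos, hEsum, fun i x a => D⁻¹ * (τ i x a)ᵀ * D⁻¹, ?_, ?_, ?_, ?_⟩
  · intro i x a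
    have h2 := ((hτpos i x a).transpose).mul_mul_conjTranspose_same D⁻¹
    rwa [hDih] at h2
  · intro i x
    have : (∑ a, D⁻¹ * (τ i x a)ᵀ * D⁻¹)
        = D⁻¹ * (∑ a, τ i x a)ᵀ * D⁻¹ := by
      rw [Matrix.transpose_sum, Finset.mul_sum, Finset.sum_mul]
    rw [this, hτred i x, ← hEsum i]
    rw [Matrix.transpose_sum, Finset.mul_sum, Finset.sum_mul]
  · intro x a
    have h : (∑ i, (p i : ℂ) • (D⁻¹ * (τ i x a)ᵀ * D⁻¹))
        = D⁻¹ * (∑ i, (p i : ℂ) • τ i x a)ᵀ * D⁻¹ := by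
      rw [Matrix.transpose_sum, Finset.mul_sum, Finset.sum_mul]
      congr 1; funext i
      rw [Matrix.transpose_smul, Matrix.mul_smul, Matrix.smul_mul]
    rw [h, ← hσdecomp x a, Matrix.transpose_mul, Matrix.transpose_mul, hDt,
      Matrix.transpose_transpose]
    rw [← Matrix.mul_assoc, ← Matrix.mul_assoc, hDiD, Matrix.one_mul,
      Matrix.mul_assoc, hDDi, Matrix.mul_one]
  · intro i x hx a
    show D⁻¹ * (τ i x a)ᵀ * D⁻¹ = _
    rw [hτlhs i x hx a, Matrix.transpose_sum, Finset.mul_sum, Finset.sum_mul]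
    congr 1; funext l
    rw [Matrix.transpose_smul, Matrix.transpose_smul, Matrix.mul_smul, Matrix.smul_mul,
      Matrix.mul_smul, Matrix.smul_mul, smul_smul]
    congr 1
    push_cast
    ring

end
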